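/- Let P be a weakly prime submodule of M containing N and let p_1 be the isolated prime of P. Then wcl_{p_1}(N + p_1 M) ⊆ P. -/

import Mathlib

section

variable {R M : Type*} [CommRing R] [AddCommGroup M] [Module R M]

/-- The submodule generated by the envelope of `N` in `M`. -/
def envSub (N : Submodule R M) : Submodule R M :=
  Submodule.span R {x : M | ∃ (r : R) (m : M) (k : ℕ), 0 < k ∧ r ^ k • m ∈ N ∧ x = r • m}

/-- The iterated envelopes: `⟨E_0(N)⟩ = N`, `⟨E_{n+1}(N)⟩ = ⟨E_M(⟨E_n(N)⟩)⟩`. -/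
def iterEnv (N : Submodule R M) : ℕ → Submodule R M
  | 0 => N
  | n + 1 => envSub (iterEnv N n)

/-- The union of envelopes `UE_M(N) = ⋃_n ⟨E_n(N)⟩`; for a submodule `K` with
`(K : M) = p` prime this is the weakly `p`-closure `wcl_p(K)`. -/
def unionEnv (N : Submodule R M) : Submodule R M := ⨆ n, iterEnv N n

/-- In a weakly prime submodule, `r ^ k • m ∈ P` with `k > 0` implies `r • m ∈ P`. -/
lemma pow_smul_mem_of_weakly_prime {P : Submodule R M}
    (hwp : ∀ (a b : R) (m : M), (a * b) • m ∈ P → a • m ∈ P ∨ b • m ∈ P)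
    (r : R) (m : M) : ∀ k : ℕ, 0 < k → r ^ k • m ∈ P → r • m ∈ P := by
  intro k
  induction k with
  | zero => intro h; omega
  | succ n ih =>
    intro _ h
    rcases Nat.eq_zero_or_pos n with hn | hn
    · subst hn; simpa using h
    · rw [pow_succ] at h
      rcases hwp (r ^ n) r m h with h1 | h2
      · exact ih hn h1
      · exact h2

/-- The colon ideals of elements outside a weakly prime submodule form a chain. -/
lemma colon_comparable {P : Submodule R M}
    (hwp : ∀ (a b : R) (m : M), (a * b) • m ∈ P → a • m ∈ P ∨ b • m ∈ P)
    (m m' : M) (hm' : m' ∉ P) :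
    (∀ r : R, r • m ∈ P → r • m' ∈ P) ∨ (∀ r : R, r • m' ∈ P → r • m ∈ P) := by
  by_contra hc
  push_neg at hc
  obtain ⟨⟨a, ham, ham'⟩, ⟨b, hbm', hbm⟩⟩ := hc
  by_cases hsum : m + m' ∈ P
  · apply ham'
    have : a • (m + m') ∈ P := P.smul_mem a hsum
    rw [smul_add] at this
    have := P.sub_mem this ham
    simpa using this
  · have hab : (a * b) • (m + m') ∈ P := by
      rw [smul_add]
      refine P.add_mem ?_ ?_
      · rw [mul_comm, mul_smul]; exact P.smul_mem b ham
      · rw [mul_smul]; exact P.smul_mem a hbm'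
    rcases hwp a b (m + m') hab with h | h
    · rw [smul_add] at h
      exact ham' (by simpa using P.sub_mem h ham)
    · rw [smul_add] at h
      exact hbm (by simpa using P.sub_mem h hbm')

/-- Let `P` be a weakly prime submodule of `M` containing `N` and let `p₁`
be the isolated prime of `P`. Then `wcl_{p₁}(N + p₁M) ⊆ P`. -/
theorem weakly_closure_le_weakly_prime
    [IsNoetherianRing R] [Module.Finite R M]
    (N P : Submodule R M) (hNP : N ≤ P)
    -- `P` is weakly prime
    (hP : P ≠ ⊤)
    (hwp : ∀ (a b : R) (m : M), (a * b) • m ∈ P → a • m ∈ P ∨ b • m ∈ P)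
    -- `p₁` is the isolated prime of `P`: the unique minimal associated prime of `M/P`
    (p₁ : Ideal R)
    (hiso : p₁ ∈ associatedPrimes R (M ⧸ P) ∧
        ∀ q ∈ associatedPrimes R (M ⧸ P), q ≤ p₁ → q = p₁)
    (huniq : ∀ q ∈ associatedPrimes R (M ⧸ P),
        (∀ q' ∈ associatedPrimes R (M ⧸ P), q' ≤ q → q' = q) → q = p₁) :
    unionEnv (N ⊔ p₁ • (⊤ : Submodule R M)) ≤ P := by
  -- membership in the annihilator ideal of `mk m`
  have hmem_ann : ∀ (m : M) (r : R),
      r ∈ (R ∙ (Submodule.Quotient.mk m : M ⧸ P)).annihilator ↔ r • m ∈ P := by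
    intro m r
    rw [Submodule.mem_annihilator_span_singleton, ← Submodule.Quotient.mk_smul,
      Submodule.Quotient.mk_eq_zero]
  -- p₁ is the colon ideal of some m₁ ∉ P
  obtain ⟨hp₁prime, x, hx⟩ : p₁.IsPrime ∧ ∃ x : M ⧸ P, p₁ = (R ∙ x).annihilator := by
    obtain ⟨h1, x, hx⟩ := isAssociatedPrime_iff.mp hiso.1
    exact ⟨h1, x, hx.trans (by ext r; rw [Submodule.mem_colon_singleton,
      Submodule.mem_annihilator_span_singleton, Submodule.mem_bot])⟩
  obtain ⟨m₁, rfl⟩ := Submodule.Quotient.mk_surjective P x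
  have hm₁ : m₁ ∉ P := by
    intro h
    apply hp₁prime.ne_top
    rw [hx, Ideal.eq_top_iff_one, hmem_ann]
    simpa using h
  have hp₁mem : ∀ r : R, r ∈ p₁ ↔ r • m₁ ∈ P := by
    intro r; rw [hx, hmem_ann]
  -- key: p₁ • ⊤ ≤ P
  have hsmul : p₁ • (⊤ : Submodule R M) ≤ P := by
    rw [Submodule.smul_le]
    intro r hr m _
    by_cases hm : m ∈ P
    · exact P.smul_mem r hm
    · rcases colon_comparable hwp m₁ m hm with h | h
      · exact h r ((hp₁mem r).mp hr)
      -- other direction: colon ideal of m is an associated prime below p₁, hence equals p₁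
      · set q : Ideal R := (R ∙ (Submodule.Quotient.mk m : M ⧸ P)).annihilator with hq
        have hqprime : q.IsPrime := by
          constructor
          · intro ht
            rw [Ideal.eq_top_iff_one, hmem_ann] at ht
            exact hm (by simpa using ht)
          · intro a b hab
            rw [hmem_ann] at hab
            rcases hwp a b m hab with h1 | h1
            · exact Or.inl ((hmem_ann m a).mpr h1)
            · exact Or.inr ((hmem_ann m b).mpr h1)
        have hqassoc : q ∈ associatedPrimes R (M ⧸ P) :=
          isAssociatedPrime_iff.mpr ⟨hqprime, Submodule.Quotient.mk m, by
            ext r; exact (hmem_ann m r).trans (by rw [Submodule.mem_colon_singleton,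
              Submodule.mem_bot, ← Submodule.Quotient.mk_smul, Submodule.Quotient.mk_eq_zero])⟩
        have hqle : q ≤ p₁ := by
          intro r' hr'
          rw [hp₁mem]
          exact h r' ((hmem_ann m r').mp hr')
        have : q = p₁ := hiso.2 q hqassoc hqle
        rw [← this] at hr
        exact (hmem_ann m r).mp hr
  have hbase : N ⊔ p₁ • (⊤ : Submodule R M) ≤ P := sup_le hNP hsmul
  -- iterated envelopes stay inside P
  have hiter : ∀ n, iterEnv (N ⊔ p₁ • (⊤ : Submodule R M)) n ≤ P := by
    intro n
    induction n with
    | zero => exact hbase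
    | succ n ih =>
      show envSub _ ≤ P
      rw [envSub, Submodule.span_le]
      rintro x ⟨r, m, k, hk, hmem, rfl⟩
      exact pow_smul_mem_of_weakly_prime hwp r m k hk (ih hmem)
  exact iSup_le hiter

end
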